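/- Let Q be a strictly positive self-adjoint operator on H and b ∈ B(H). For x, y in the domain of Q, the function f(z) := ⟨Q^{i(z̄ − i)} x, b* Q^{iz} y⟩ is well-defined, bounded, and continuous on the closed strip {z ∈ ℂ : −1 ≤ Im z ≤ 0}, and holomorphic in its interior; for real t, f(t) = ⟨Qx, Q^{-it} b* Q^{it} y⟩ and f(t − i) = ⟨x, Q^{-it} b* Q^{it} Q y⟩. -/

import Mathlib

open Complex NormedSpace

section aux

variable {A : Type*} [NormedRing A] [NormedAlgebra ℂ A] [CompleteSpace A] [NormOneClass A]

lemma myNorm_exp_le (a : A) : ‖exp a‖ ≤ Real.exp ‖a‖ := by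
  rw [exp_eq_tsum ℂ]
  refine (norm_tsum_le_tsum_norm (norm_expSeries_summable' (𝕂 := ℂ) a)).trans ?_
  rw [Real.exp_eq_exp_ℝ, exp_eq_tsum ℝ]
  refine Summable.tsum_le_tsum (fun n => ?_) (norm_expSeries_summable' (𝕂 := ℂ) a)
    (expSeries_summable' (𝕂 := ℝ) ‖a‖)
  rw [norm_smul, smul_eq_mul, norm_inv]
  have h1 : ‖((n.factorial : ℂ))‖ = ((n.factorial : ℝ)) := by
    simpa using Complex.norm_natCast n.factorial
  rw [h1]
  gcongr
  exact norm_pow_le a n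

end aux

/-!
STATEMENT 3.  `H` a complex Hilbert space, `Q` a strictly positive
self-adjoint (bounded) operator on `H` (spectrum contained in `(0,∞)`), with
complex powers `Q ^ w = cfc (r ↦ r ^ w) Q` given by the continuous functional
calculus, and `b ∈ B(H)`.  For `x, y ∈ H (= dom Q)` the function
`f(z) = ⟨Q^{i(z̄−i)} x, b* Q^{iz} y⟩` is bounded and continuous on the closed
strip `{−1 ≤ Im z ≤ 0}`, holomorphic in its interior, and for real `t`:
`f(t) = ⟨Qx, Q^{−it} b* Q^{it} y⟩` and `f(t−i) = ⟨x, Q^{−it} b* Q^{it} Qy⟩`.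
(Mathlib's inner product is conjugate-linear in the first variable, matching
the physicists' convention `(u | T | v)` of the paper.)
-/
set_option maxHeartbeats 1000000 in
theorem stmt3 {H : Type*} [NormedAddCommGroup H] [InnerProductSpace ℂ H]
    [CompleteSpace H]
    (Q b : H →L[ℂ] H) (hQ : IsSelfAdjoint Q)
    (hpos : ∀ r ∈ spectrum ℝ Q, 0 < r)
    (x y : H)
    (Qc : ℂ → H →L[ℂ] H) (hQc : Qc = fun w => cfc (fun r : ℂ => r ^ w) Q)
    (f : ℂ → ℂ)
    (hf : f = fun z =>
      inner (𝕜 := ℂ) (Qc (Complex.I * ((starRingEnd ℂ) z - Complex.I)) x)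
        ((ContinuousLinearMap.adjoint b) (Qc (Complex.I * z) y))) :
    (∃ C : ℝ, ∀ z : ℂ, -1 ≤ z.im → z.im ≤ 0 → ‖f z‖ ≤ C) ∧
    ContinuousOn f {z : ℂ | -1 ≤ z.im ∧ z.im ≤ 0} ∧
    DifferentiableOn ℂ f {z : ℂ | -1 < z.im ∧ z.im < 0} ∧
    (∀ t : ℝ, f t =
      inner (𝕜 := ℂ) (Q x)
        (Qc (-(Complex.I * t)) ((ContinuousLinearMap.adjoint b) (Qc (Complex.I * t) y)))) ∧
    (∀ t : ℝ, f ((t : ℂ) - Complex.I) =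
      inner (𝕜 := ℂ) x
        (Qc (-(Complex.I * t)) ((ContinuousLinearMap.adjoint b) (Qc (Complex.I * t) (Q y))))) := by
  rcases subsingleton_or_nontrivial H with hsub | hnt
  · -- trivial Hilbert space: everything is zero
    have hz : ∀ v : H, v = 0 := fun v => Subsingleton.elim v 0
    have hf0 : ∀ z, f z = 0 := by
      intro z
      rw [hf]
      simp only
      rw [hz (Qc (Complex.I * ((starRingEnd ℂ) z - Complex.I)) x), inner_zero_left]
    refine ⟨⟨0, fun z _ _ => by rw [hf0]; simp⟩, ?_, ?_, ?_, ?_⟩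
    · have : f = fun _ => 0 := funext hf0
      rw [this]; exact continuousOn_const
    · have : f = fun _ => 0 := funext hf0
      rw [this]; exact differentiableOn_const 0
    · intro t; rw [hf0, hz (Q x), inner_zero_left]
    · intro t; rw [hf0, hz x, inner_zero_left]
  -- nontrivial case
  let +nondep : NormedAlgebra ℚ (H →L[ℂ] H) := .restrictScalars ℚ ℂ _
  have hQn : IsStarNormal Q := hQ.isStarNormal
  have hres := hQ.spectrumRestricts
  have hspec : ∀ z ∈ spectrum ℂ Q, ∃ r : ℝ, 0 < r ∧ z = (r : ℂ) := by
    intro z hz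
    rw [← hres.algebraMap_image] at hz
    obtain ⟨r, hr, rfl⟩ := hz
    exact ⟨r, hpos r hr, rfl⟩
  set A0 : H →L[ℂ] H := cfc (fun r : ℂ => Complex.log r) Q with hA0
  have hlogcont : ContinuousOn (fun r : ℂ => Complex.log r) (spectrum ℂ Q) := by
    intro z hz
    obtain ⟨r, hr, rfl⟩ := hspec z hz
    refine (continuousAt_clog ?_).continuousWithinAt
    rw [Complex.mem_slitPlane_iff]
    left
    simpa using hr
  have hA0sa : star A0 = A0 := by
    rw [hA0, ← cfc_star]
    apply cfc_congr
    intro z hz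
    obtain ⟨r, hr, rfl⟩ := hspec z hz
    show star (Complex.log (r : ℂ)) = Complex.log (r : ℂ)
    rw [← Complex.ofReal_log hr.le]
    exact Complex.conj_ofReal _
  have hQcexp : ∀ w : ℂ, Qc w = exp (w • A0) := by
    intro w
    have hwlog : ContinuousOn (fun r : ℂ => w * Complex.log r) (spectrum ℂ Q) :=
      continuousOn_const.mul hlogcont
    rw [hQc]
    calc cfc (fun r : ℂ => r ^ w) Q
        = cfc (Complex.exp ∘ fun r : ℂ => w * Complex.log r) Q := by
          apply cfc_congr
          intro z hz
          obtain ⟨r, hr, rfl⟩ := hspec z hz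
          show (r : ℂ) ^ w = Complex.exp (w * Complex.log (r : ℂ))
          rw [Complex.cpow_def_of_ne_zero (Complex.ofReal_ne_zero.mpr hr.ne'), mul_comm]
      _ = cfc Complex.exp (cfc (fun r : ℂ => w * Complex.log r) Q) :=
          cfc_comp _ _ Q hQn Complex.continuous_exp.continuousOn hwlog
      _ = exp (cfc (fun r : ℂ => w * Complex.log r) Q) :=
          CFC.complex_exp_eq_normedSpace_exp (cfc_predicate _ Q)
      _ = exp (w • A0) := by
          rw [show (fun r : ℂ => w * Complex.log r) = (fun r : ℂ => w • Complex.log r) from rfl,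
            cfc_smul w _ Q hlogcont]
  -- commutation of scalar multiples of A0
  have hcomm : ∀ v w : ℂ, Commute (v • A0) (w • A0) := by
    intro v w
    show _ = _
    rw [smul_mul_smul_comm, smul_mul_smul_comm, mul_comm v w]
  have hexp_add : ∀ v w : ℂ, exp ((v + w) • A0) = exp (v • A0) * exp (w • A0) := by
    intro v w
    rw [add_smul]
    exact exp_add_of_commute (hcomm v w)
  -- star of exponentials
  have hstar_exp : ∀ w : ℂ, star (exp (w • A0)) = exp ((starRingEnd ℂ w) • A0) := by
    intro w
    rw [star_exp, star_smul, hA0sa]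
    rfl
  -- unitarity
  have hunit : ∀ s : ℝ, ‖exp (((s : ℂ) * Complex.I) • A0)‖ = 1 := by
    intro s
    have hskew : ((s : ℂ) * Complex.I) • A0 ∈ skewAdjoint (H →L[ℂ] H) := by
      rw [skewAdjoint.mem_iff, star_smul, hA0sa, ← neg_smul]
      congr 1
      show (starRingEnd ℂ) ((s : ℂ) * Complex.I) = -((s : ℂ) * Complex.I)
      rw [map_mul, Complex.conj_I, Complex.conj_ofReal]
      ring
    exact CStarRing.norm_of_mem_unitary (exp_mem_unitary_of_mem_skewAdjoint hskew)
  -- norm bound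
  have hbnd : ∀ w : ℂ, ‖exp (w • A0)‖ ≤ Real.exp (|w.re| * ‖A0‖) := by
    intro w
    have hw : w = (w.re : ℂ) + (w.im : ℂ) * Complex.I := (Complex.re_add_im w).symm
    calc ‖exp (w • A0)‖
        = ‖exp ((w.re : ℂ) • A0) * exp (((w.im : ℂ) * Complex.I) • A0)‖ := by
          rw [← hexp_add, ← hw]
      _ ≤ ‖exp ((w.re : ℂ) • A0)‖ * ‖exp (((w.im : ℂ) * Complex.I) • A0)‖ := norm_mul_le _ _
      _ = ‖exp ((w.re : ℂ) • A0)‖ := by rw [hunit, mul_one]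
      _ ≤ Real.exp ‖(w.re : ℂ) • A0‖ := myNorm_exp_le _
      _ = Real.exp (|w.re| * ‖A0‖) := by rw [norm_smul, Complex.norm_real, Real.norm_eq_abs]
  -- the holomorphic representative
  set g : ℂ → ℂ := fun z =>
    inner (𝕜 := ℂ) x (exp ((1 - Complex.I * z) • A0)
      ((ContinuousLinearMap.adjoint b) (exp ((Complex.I * z) • A0) y))) with hg
  have hfg : f = g := by
    funext z
    simp only [hf, hg]
    have h1 : Complex.I * ((starRingEnd ℂ) z - Complex.I)
        = Complex.I * (starRingEnd ℂ) z + 1 := by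
      rw [mul_sub, Complex.I_mul_I, sub_neg_eq_add]
    rw [h1, hQcexp, hQcexp]
    rw [← ContinuousLinearMap.adjoint_inner_right]
    congr 1
    rw [← ContinuousLinearMap.star_eq_adjoint, hstar_exp]
    congr 2
    rw [map_add, map_mul, Complex.conj_I, Complex.conj_conj, map_one]
    ring
  -- differentiability of g
  have hOp : ∀ c d : ℂ, Differentiable ℂ (fun z : ℂ => exp ((c + d * z) • A0)) := by
    intro c d
    have h1 : Differentiable ℂ (fun u : ℂ => exp (u • A0)) :=
      fun u => (hasDerivAt_exp_smul_const A0 u).differentiableAt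
    have h2 : Differentiable ℂ (fun z : ℂ => c + d * z) :=
      (differentiable_const c).add (differentiable_id.const_mul d)
    exact h1.comp h2
  have hOp1 : Differentiable ℂ (fun z : ℂ => exp ((1 - Complex.I * z) • A0)) := by
    have := hOp 1 (-Complex.I)
    simpa [sub_eq_add_neg, neg_mul] using this
  have hOp2 : Differentiable ℂ (fun z : ℂ => exp ((Complex.I * z) • A0)) := by
    have := hOp 0 Complex.I
    simpa using this
  have hdiff : Differentiable ℂ g := by
    have hv : Differentiable ℂ (fun z : ℂ => exp ((Complex.I * z) • A0) y) :=
      hOp2.clm_apply (differentiable_const y)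
    have hu : Differentiable ℂ (fun z : ℂ =>
        (ContinuousLinearMap.adjoint b) (exp ((Complex.I * z) • A0) y)) :=
      (differentiable_const (ContinuousLinearMap.adjoint b)).clm_apply hv
    have hh : Differentiable ℂ (fun z : ℂ =>
        exp ((1 - Complex.I * z) • A0)
          ((ContinuousLinearMap.adjoint b) (exp ((Complex.I * z) • A0) y))) :=
      hOp1.clm_apply hu
    have hrepr : g = fun z => (innerSL ℂ x)
        (exp ((1 - Complex.I * z) • A0)
          ((ContinuousLinearMap.adjoint b) (exp ((Complex.I * z) • A0) y))) := by
      funext z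
      rw [hg]
      simp [innerSL_apply_apply]
    rw [hrepr]
    exact (differentiable_const (innerSL ℂ x)).clm_apply hh
  have hgcont : Continuous g := hdiff.continuous
  refine ⟨?_, ?_, ?_, ?_, ?_⟩
  · -- boundedness
    refine ⟨‖x‖ * (Real.exp ‖A0‖ * (‖ContinuousLinearMap.adjoint b‖ *
      (Real.exp ‖A0‖ * ‖y‖))), fun z h1 h2 => ?_⟩
    rw [hfg]
    simp only [hg]
    have e1 : ‖exp ((1 - Complex.I * z) • A0)‖ ≤ Real.exp ‖A0‖ := by
      refine (hbnd _).trans (Real.exp_le_exp.mpr ?_)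
      have hre : (1 - Complex.I * z).re = 1 + z.im := by simp
      rw [hre]
      have habs : |1 + z.im| ≤ 1 := abs_le.mpr ⟨by linarith, by linarith⟩
      nlinarith [norm_nonneg A0, abs_nonneg (1 + z.im)]
    have e2 : ‖exp ((Complex.I * z) • A0)‖ ≤ Real.exp ‖A0‖ := by
      refine (hbnd _).trans (Real.exp_le_exp.mpr ?_)
      have hre : (Complex.I * z).re = -z.im := by simp
      rw [hre]
      have habs : |(-z.im)| ≤ 1 := abs_le.mpr ⟨by linarith, by linarith⟩
      nlinarith [norm_nonneg A0, abs_nonneg (-z.im)]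
    refine (norm_inner_le_norm _ _).trans ?_
    have e3 : ‖(ContinuousLinearMap.adjoint b) (exp ((Complex.I * z) • A0) y)‖ ≤
        ‖ContinuousLinearMap.adjoint b‖ * (Real.exp ‖A0‖ * ‖y‖) := by
      refine (ContinuousLinearMap.le_opNorm _ _).trans ?_
      gcongr
      exact (ContinuousLinearMap.le_opNorm _ _).trans (by gcongr)
    have e4 : ‖exp ((1 - Complex.I * z) • A0)
        ((ContinuousLinearMap.adjoint b) (exp ((Complex.I * z) • A0) y))‖ ≤
        Real.exp ‖A0‖ * (‖ContinuousLinearMap.adjoint b‖ * (Real.exp ‖A0‖ * ‖y‖)) := by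
      refine (ContinuousLinearMap.le_opNorm _ _).trans ?_
      exact mul_le_mul e1 e3 (norm_nonneg _) (Real.exp_pos _).le
    exact mul_le_mul_of_nonneg_left e4 (norm_nonneg x)
  · rw [hfg]; exact hgcont.continuousOn
  · rw [hfg]; exact hdiff.differentiableOn
  · -- value at real t
    intro t
    rw [hfg]
    simp only [hg]
    rw [hQcexp, hQcexp]
    have h1 : (1 : ℂ) - Complex.I * (t : ℂ) = 1 + (-(Complex.I * t)) := by ring
    rw [h1, hexp_add]
    have hexpQ : exp ((1 : ℂ) • A0) = Q := by
      rw [← hQcexp, hQc]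
      calc cfc (fun r : ℂ => r ^ (1 : ℂ)) Q = cfc (fun r : ℂ => r) Q := by
            apply cfc_congr
            intro z hz
            exact Complex.cpow_one z
        _ = Q := cfc_id ℂ Q
    rw [ContinuousLinearMap.mul_apply, hexpQ]
    rw [← ContinuousLinearMap.adjoint_inner_left Q]
    rw [hQ.adjoint_eq]
  · -- value at t - i
    intro t
    rw [hfg]
    simp only [hg]
    rw [hQcexp, hQcexp]
    have hII : Complex.I * Complex.I = -1 := Complex.I_mul_I
    have h1 : (1 : ℂ) - Complex.I * ((t : ℂ) - Complex.I) = -(Complex.I * t) := by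
      linear_combination hII
    have h2 : Complex.I * ((t : ℂ) - Complex.I) = Complex.I * (t : ℂ) + 1 := by
      linear_combination -hII
    rw [h1, h2, hexp_add]
    have hexpQ : exp ((1 : ℂ) • A0) = Q := by
      rw [← hQcexp, hQc]
      calc cfc (fun r : ℂ => r ^ (1 : ℂ)) Q = cfc (fun r : ℂ => r) Q := by
            apply cfc_congr
            intro z hz
            exact Complex.cpow_one z
        _ = Q := cfc_id ℂ Q
    rw [ContinuousLinearMap.mul_apply, hexpQ]
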